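/- arXiv:2603.00034 — 3 statements merged into one kernel-verified Lean document; each statement's English description precedes it below -/
import Mathlib

section
/- Let u and v be unit vectors in ℝ² making an angle α such that α/π is irrational. Let M ⊆ ℝ² be a Lebesgue measurable set of finite Lebesgue measure which is symmetric with respect to the line ℝu and with respect to the line ℝv up to sets of measure zero (i.e., λ(σ_u(M) Δ M) = 0 and λ(σ_v(M) Δ M) = 0, where σ_u and σ_v denote the reflections of ℝ² across the lines through the origin spanned by u and v, and λ denotes Lebesgue measure). Then M is an annulus centered at the origin: there exists a measurable set M₀ ⊆ [0,∞) such that λ(M Δ {x ∈ ℝ² : ‖x‖ ∈ M₀}) = 0. -/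
open MeasureTheory InnerProductGeometry

open scoped ENNReal

/-- The orthogonal reflection of the plane `ℝ² ≃ ℂ` across the line `ℝ u`
spanned by the unit vector `u`: `σ_u (x) = 2 ⟪x, u⟫ u - x`. -/
noncomputable def lineReflection (u : ℂ) (x : ℂ) : ℂ :=
  (2 : ℝ) • (inner ℝ x u : ℝ) • u - x

namespace Stmt0Aux

open Complex Set Metric

lemma lineReflection_eq (u : ℂ) (hu : ‖u‖ = 1) (x : ℂ) :
    lineReflection u x = u ^ 2 * (starRingEnd ℂ) x := by
  have h : u.re * u.re + u.im * u.im = 1 := by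
    have : Complex.normSq u = 1 := by
      rw [Complex.normSq_eq_norm_sq, hu]; norm_num
    simpa [Complex.normSq_apply] using this
  simp only [lineReflection, Complex.inner, Complex.ext_iff, Complex.sub_re, Complex.sub_im,
    Complex.smul_re, Complex.smul_im, Complex.mul_re, Complex.mul_im, Complex.conj_re,
    Complex.conj_im, pow_two, smul_eq_mul]
  constructor
  · linear_combination x.re * h
  · linear_combination x.im * h

lemma measurePreserving_mul_unit {z : ℂ} (hz : ‖z‖ = 1) :
    MeasurePreserving (fun x : ℂ => z * x) volume volume := by
  have h := LinearIsometryEquiv.measurePreserving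
    (rotation ⟨z, mem_sphere_zero_iff_norm.2 hz⟩)
  have heq : ⇑(rotation ⟨z, mem_sphere_zero_iff_norm.2 hz⟩) = fun x : ℂ => z * x := by
    funext x; rfl
  rwa [heq] at h

lemma vol_preimage_mul_unit {z : ℂ} (hz : ‖z‖ = 1) {X : Set ℂ} (hX : MeasurableSet X) :
    volume ((fun x : ℂ => z * x) ⁻¹' X) = volume X :=
  (measurePreserving_mul_unit hz).measure_preimage hX.nullMeasurableSet

lemma measurePreserving_mul_conj {u : ℂ} (hu : ‖u‖ = 1) :
    MeasurePreserving (fun x : ℂ => u * (starRingEnd ℂ) x) volume volume :=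
  (measurePreserving_mul_unit hu).comp Complex.conjLIE.measurePreserving

lemma vol_preimage_mul_conj {u : ℂ} (hu : ‖u‖ = 1) {X : Set ℂ} (hX : MeasurableSet X) :
    volume ((fun x : ℂ => u * (starRingEnd ℂ) x) ⁻¹' X) = volume X :=
  (measurePreserving_mul_conj hu).measure_preimage hX.nullMeasurableSet

/-- The "rotation defect" of the set `M`. -/
noncomputable def FF (M : Set ℂ) (z : ℂ) : ℝ≥0∞ :=
  volume (symmDiff ((fun x : ℂ => z * x) ⁻¹' M) M)

section FF

variable {M : Set ℂ} (hM : MeasurableSet M)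

include hM

lemma measurableSet_pre (z : ℂ) : MeasurableSet ((fun x : ℂ => z * x) ⁻¹' M) :=
  (measurable_const.mul measurable_id) hM

lemma FF_one : FF M 1 = 0 := by
  simp [FF]

lemma FF_mul {a b : ℂ} (hb : ‖b‖ = 1) : FF M (a * b) ≤ FF M a + FF M b := by
  have hcomp : (fun x : ℂ => (a * b) * x) ⁻¹' M
      = (fun x : ℂ => b * x) ⁻¹' ((fun x : ℂ => a * x) ⁻¹' M) := by
    ext x; simp [Set.mem_preimage, mul_assoc]
  have h1 := measure_symmDiff_le (μ := volume) ((fun x : ℂ => (a*b) * x) ⁻¹' M)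
    ((fun x : ℂ => b * x) ⁻¹' M) M
  have h2 : volume (symmDiff ((fun x : ℂ => (a*b) * x) ⁻¹' M) ((fun x : ℂ => b * x) ⁻¹' M))
      = FF M a := by
    rw [hcomp, ← Set.preimage_symmDiff]
    exact vol_preimage_mul_unit hb ((measurableSet_pre hM a).symmDiff hM)
  calc FF M (a * b) ≤ _ + _ := h1
  _ = FF M a + FF M b := by rw [h2]; rfl

lemma FF_inv {a : ℂ} (ha : ‖a‖ = 1) : FF M a⁻¹ = FF M a := by
  have ha0 : a ≠ 0 := by intro h; rw [h] at ha; simp at ha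
  have key : (fun x : ℂ => a * x) ⁻¹' ((fun x : ℂ => a⁻¹ * x) ⁻¹' M) = M := by
    ext x; simp [Set.mem_preimage, inv_mul_cancel_left₀ ha0]
  have h1 : FF M a⁻¹
      = volume ((fun x : ℂ => a * x) ⁻¹' (symmDiff ((fun x : ℂ => a⁻¹ * x) ⁻¹' M) M)) := by
    rw [vol_preimage_mul_unit ha ((measurableSet_pre hM a⁻¹).symmDiff hM)]; rfl
  rw [h1, Set.preimage_symmDiff, key, symmDiff_comm]; rfl

lemma FF_zpow {w : ℂ} (hw : ‖w‖ = 1) (h0 : FF M w = 0) : ∀ n : ℤ, FF M (w ^ n) = 0 := by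
  have hnat : ∀ n : ℕ, FF M (w ^ n) = 0 := by
    intro n
    induction n with
    | zero => simpa using FF_one hM
    | succ n ih =>
      refine le_antisymm ?_ zero_le
      calc FF M (w ^ (n+1)) = FF M (w ^ n * w) := by rw [pow_succ]
        _ ≤ FF M (w ^ n) + FF M w := FF_mul hM hw
        _ = 0 := by rw [ih, h0, add_zero]
  intro n
  rcases n with k | k
  · simpa using hnat k
  · rw [zpow_negSucc]
    have hk : ‖w ^ (k + 1)‖ = 1 := by rw [norm_pow, hw, one_pow]
    rw [FF_inv hM hk]
    exact hnat (k + 1)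

end FF

lemma norm_exp_I_sub_one_le (t : ℝ) : ‖Complex.exp (t * I) - 1‖ ≤ |t| := by
  have hre : (Complex.exp (↑t * I) - 1).re = Real.cos t - 1 := by
    simp [Complex.exp_ofReal_mul_I_re]
  have him : (Complex.exp (↑t * I) - 1).im = Real.sin t := by
    simp [Complex.exp_ofReal_mul_I_im]
  have hns : Complex.normSq (Complex.exp (↑t * I) - 1) = 2 - 2 * Real.cos t := by
    rw [Complex.normSq_apply, hre, him]
    nlinarith [Real.sin_sq_add_cos_sq t]
  have hnorm : ‖Complex.exp (↑t * I) - 1‖ = Real.sqrt (2 - 2 * Real.cos t) := by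
    rw [Complex.norm_def, hns]
  rw [hnorm]
  have hb := Real.one_sub_sq_div_two_le_cos (x := t)
  calc Real.sqrt (2 - 2 * Real.cos t) ≤ Real.sqrt (t ^ 2) :=
        Real.sqrt_le_sqrt (by nlinarith)
    _ = |t| := Real.sqrt_sq_eq_abs t

lemma norm_exp_sub_exp_le (a b : ℝ) :
    ‖Complex.exp (a * I) - Complex.exp (b * I)‖ ≤ |a - b| := by
  have hsplit : Complex.exp (↑a * I) - Complex.exp (↑b * I)
      = Complex.exp (↑b * I) * (Complex.exp (↑(a - b) * I) - 1) := by
    rw [mul_sub, ← Complex.exp_add, mul_one]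
    congr 2
    push_cast; ring
  rw [hsplit, norm_mul]
  have h1 : ‖Complex.exp (↑b * I)‖ = 1 := by
    rw [Complex.norm_exp_ofReal_mul_I]
  rw [h1, one_mul]
  exact norm_exp_I_sub_one_le (a - b)

lemma exists_zpow_near {t : ℝ} (ht : Irrational (t / (2 * Real.pi))) (z : ℂ) (hz : ‖z‖ = 1)
    {ε : ℝ} (hε : 0 < ε) : ∃ n : ℤ, ‖Complex.exp (t * I) ^ n - z‖ < ε := by
  set S : AddSubgroup ℝ := AddSubgroup.closure {t, 2 * Real.pi} with hS
  have hdense : Dense (S : Set ℝ) := by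
    rcases S.dense_or_cyclic with h | ⟨a, ha⟩
    · exact h
    · exfalso
      have htS : t ∈ S := AddSubgroup.subset_closure (by simp)
      have hpS : 2 * Real.pi ∈ S := AddSubgroup.subset_closure (by simp)
      rw [ha, AddSubgroup.mem_closure_singleton] at htS hpS
      obtain ⟨p, hp⟩ := htS
      obtain ⟨q, hq⟩ := hpS
      have hq0 : (q : ℝ) ≠ 0 := by
        rintro h
        rw [show q = 0 by exact_mod_cast h] at hq
        simp at hq
      have ha0 : a ≠ 0 := by
        rintro rfl
        simp at hq
      apply ht
      refine ⟨(p : ℚ) / (q : ℚ), ?_⟩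
      have heq : t / (2 * Real.pi) = (p : ℝ) / (q : ℝ) := by
        rw [← hp, ← hq, zsmul_eq_mul, zsmul_eq_mul, mul_div_mul_right _ _ ha0]
      push_cast
      rw [heq]
  have hψ := Metric.mem_closure_iff.1 (hdense (Complex.arg z)) ε hε
  obtain ⟨s, hsS, hdist⟩ := hψ
  obtain ⟨n, m, hnm⟩ := AddSubgroup.mem_closure_pair.1 hsS
  refine ⟨n, ?_⟩
  have hzexp : Complex.exp (Complex.arg z * I) = z := by
    have h := Complex.norm_mul_exp_arg_mul_I z
    rwa [hz, Complex.ofReal_one, one_mul] at h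
  have hwn : Complex.exp (↑t * I) ^ n = Complex.exp (↑s * I) := by
    rw [← Complex.exp_int_mul]
    have h2 : (↑s : ℂ) * I = ↑m * (2 * ↑Real.pi * I) + ↑n * (↑t * I) := by
      rw [← hnm]; push_cast [zsmul_eq_mul]; ring
    rw [h2, Complex.exp_add, Complex.exp_int_mul_two_pi_mul_I, one_mul]
  rw [hwn, ← hzexp]
  calc ‖Complex.exp (↑s * I) - Complex.exp (↑(Complex.arg z) * I)‖ ≤ |s - Complex.arg z| :=
        norm_exp_sub_exp_le s (Complex.arg z)
    _ < ε := by rw [abs_sub_comm, ← Real.dist_eq]; exact hdist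

lemma FF_small {M : Set ℂ} (hM : MeasurableSet M) (hMfin : volume M < ⊤)
    {ε : ℝ≥0∞} (hε : 0 < ε) :
    ∃ δ > (0 : ℝ), ∀ z : ℂ, ‖z‖ = 1 → ‖z - 1‖ < δ → FF M z ≤ ε := by
  have hε4 : ε / 2 / 2 ≠ 0 := by
    simp only [ne_eq, ENNReal.div_eq_zero_iff]
    push_neg
    refine ⟨⟨hε.ne', by norm_num⟩, by norm_num⟩
  obtain ⟨K, hKM, hKc, hKs⟩ := hM.exists_isCompact_diff_lt hMfin.ne hε4
  obtain ⟨U, hMU, hUo, hUfin, hUs⟩ := hM.exists_isOpen_diff_lt hMfin.ne hε4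
  have hUKmeas : MeasurableSet (U \ K) := hUo.measurableSet.diff hKc.measurableSet
  have hUK : volume (U \ K) ≤ ε / 2 := by
    have hsub : U \ K ⊆ (U \ M) ∪ (M \ K) := by
      intro x ⟨hxU, hxK⟩
      by_cases hxM : x ∈ M
      · exact Or.inr ⟨hxM, hxK⟩
      · exact Or.inl ⟨hxU, hxM⟩
    calc volume (U \ K) ≤ volume ((U \ M) ∪ (M \ K)) := measure_mono hsub
      _ ≤ volume (U \ M) + volume (M \ K) := measure_union_le _ _
      _ ≤ ε / 2 / 2 + ε / 2 / 2 := add_le_add hUs.le hKs.le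
      _ = ε / 2 := ENNReal.add_halves _
  obtain ⟨δ, hδ0, hδ⟩ := hKc.exists_thickening_subset_open hUo (hKM.trans hMU)
  obtain ⟨R, hR⟩ := isBounded_iff_forall_norm_le.1 hKc.isBounded
  set R' : ℝ := |R| + 1 with hR'
  have hR'pos : 0 < R' := by positivity
  have hRK : ∀ x ∈ K, ‖x‖ ≤ R' := fun x hx =>
    (hR x hx).trans (by rw [hR']; have := le_abs_self R; linarith)
  refine ⟨δ / R', div_pos hδ0 hR'pos, ?_⟩
  intro z hz hznear
  have hz0 : z ≠ 0 := by intro h; rw [h] at hz; simp at hz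
  have hmove : ∀ y : ℂ, ‖y - 1‖ < δ / R' → ∀ x ∈ K, y * x ∈ U := by
    intro y hy x hx
    apply hδ
    rw [Metric.mem_thickening_iff]
    refine ⟨x, hx, ?_⟩
    rw [dist_eq_norm]
    have heq : y * x - x = (y - 1) * x := by ring
    rw [heq, norm_mul]
    calc ‖y - 1‖ * ‖x‖ ≤ ‖y - 1‖ * R' :=
          mul_le_mul_of_nonneg_left (hRK x hx) (norm_nonneg _)
      _ < (δ / R') * R' := mul_lt_mul_of_pos_right hy hR'pos
      _ = δ := div_mul_cancel₀ δ hR'pos.ne'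
  have hinv : ‖z⁻¹ - 1‖ < δ / R' := by
    have heq : z⁻¹ - 1 = z⁻¹ * (1 - z) := by field_simp
    rw [heq, norm_mul, norm_inv, hz, inv_one, one_mul, norm_sub_rev]
    exact hznear
  have h1 := hmove z hznear
  have h2 := hmove z⁻¹ hinv
  have hsub : symmDiff ((fun x : ℂ => z * x) ⁻¹' M) M
      ⊆ (U \ K) ∪ ((fun x : ℂ => z * x) ⁻¹' (U \ K)) := by
    intro x hx
    rcases Set.mem_symmDiff.1 hx with ⟨hzx, hxM⟩ | ⟨hxM, hzx⟩
    · by_cases hK : z * x ∈ K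
      · left
        have hxU : x ∈ U := by
          have := h2 _ hK
          rwa [inv_mul_cancel_left₀ hz0] at this
        exact ⟨hxU, fun hxK => hxM (hKM hxK)⟩
      · right; exact ⟨hMU hzx, hK⟩
    · by_cases hK : x ∈ K
      · right; exact ⟨h1 x hK, fun h => hzx (hKM h)⟩
      · left; exact ⟨hMU hxM, hK⟩
  calc FF M z ≤ volume ((U \ K) ∪ ((fun x : ℂ => z * x) ⁻¹' (U \ K))) := measure_mono hsub
    _ ≤ volume (U \ K) + volume ((fun x : ℂ => z * x) ⁻¹' (U \ K)) := measure_union_le _ _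
    _ = volume (U \ K) + volume (U \ K) := by rw [vol_preimage_mul_unit hz hUKmeas]
    _ ≤ ε / 2 + ε / 2 := add_le_add hUK hUK
    _ = ε := ENNReal.add_halves _

lemma FF_all_zero {M : Set ℂ} (hM : MeasurableSet M) (hMfin : volume M < ⊤) {t : ℝ}
    (ht : Irrational (t / (2 * Real.pi))) (h0 : FF M (Complex.exp (t * I)) = 0) :
    ∀ z : ℂ, ‖z‖ = 1 → FF M z = 0 := by
  intro z hz
  set w : ℂ := Complex.exp (↑t * I) with hw
  have hwnorm : ‖w‖ = 1 := by rw [hw, Complex.norm_exp_ofReal_mul_I]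
  have key : ∀ ε : ℝ≥0∞, 0 < ε → FF M z ≤ ε := by
    intro ε hε
    obtain ⟨δ, hδ0, hδ⟩ := FF_small hM hMfin hε
    obtain ⟨n, hn⟩ := exists_zpow_near ht z⁻¹ (by rw [norm_inv, hz, inv_one]) hδ0
    have hz0 : z ≠ 0 := by intro h; rw [h] at hz; simp at hz
    have hwn0 : w ^ n ≠ 0 := by
      intro h
      have : ‖w ^ n‖ = 1 := by rw [norm_zpow, hwnorm, one_zpow]
      rw [h] at this; simp at this
    have hy : ‖z * w ^ n - 1‖ < δ := by
      have heq : z * w ^ n - 1 = z * (w ^ n - z⁻¹) := by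
        rw [mul_sub, mul_inv_cancel₀ hz0]
      rw [heq, norm_mul, hz, one_mul]
      exact hn
    have hyn : ‖z * w ^ n‖ = 1 := by
      rw [norm_mul, hz, norm_zpow, hwnorm, one_zpow, mul_one]
    have h1 : FF M (z * w ^ n) ≤ ε := hδ _ hyn hy
    have h2 : FF M ((w ^ n)⁻¹) = 0 := by
      rw [show (w ^ n)⁻¹ = w ^ (-n) by rw [zpow_neg]]
      exact FF_zpow hM hwnorm h0 (-n)
    have hinv1 : ‖(w ^ n)⁻¹‖ = 1 := by rw [norm_inv, norm_zpow, hwnorm, one_zpow, inv_one]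
    calc FF M z = FF M ((z * w ^ n) * (w ^ n)⁻¹) := by
          rw [mul_assoc, mul_inv_cancel₀ hwn0, mul_one]
      _ ≤ FF M (z * w ^ n) + FF M ((w ^ n)⁻¹) := FF_mul hM hinv1
      _ ≤ ε + 0 := add_le_add h1 h2.le
      _ = ε := add_zero ε
  have hle : FF M z ≤ 0 := by
    refine ENNReal.le_of_forall_pos_le_add (fun ε hε _ => ?_)
    rw [zero_add]
    exact key ε (by exact_mod_cast hε)
  exact le_antisymm hle zero_le

lemma annulus_of_rot_invariant (M : Set ℂ) (hM : MeasurableSet M)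
    (hall : ∀ z : ℂ, ‖z‖ = 1 → volume (symmDiff ((fun x : ℂ => z * x) ⁻¹' M) M) = 0) :
    ∃ M₀ : Set ℝ, M₀ ⊆ Set.Ici 0 ∧ MeasurableSet M₀ ∧
      volume (symmDiff M {x : ℂ | ‖x‖ ∈ M₀}) = 0 := by
  haveI : Fact (0 < 2 * Real.pi) := ⟨by positivity⟩
  set e : AddCircle (2 * Real.pi) → ℂ := fun θ => ((AddCircle.toCircle θ : Circle) : ℂ) with he
  have he_cont : Continuous e := continuous_induced_dom.comp AddCircle.continuous_toCircle
  have he_norm : ∀ θ, ‖e θ‖ = 1 := fun θ => by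
    rw [he]; exact Circle.norm_coe _
  have he_exp : ∀ x : ℝ, e (x : AddCircle (2 * Real.pi)) = Complex.exp (x * I) := by
    intro x
    rw [he]
    simp only [AddCircle.toCircle_apply_mk, Circle.coe_exp]
    norm_num [div_self Real.two_pi_pos.ne']
  have he_add : ∀ θ₁ θ₂ : AddCircle (2 * Real.pi), e (θ₁ + θ₂) = e θ₁ * e θ₂ := by
    intro θ₁ θ₂; rw [he]; simp [AddCircle.toCircle_add]
  set g : ℂ → ℝ≥0∞ := fun x => ∫⁻ θ, M.indicator 1 (e θ * x) with hg
  have hm : Measurable (fun p : ℂ × AddCircle (2 * Real.pi) => e p.2 * p.1) :=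
    ((he_cont.comp continuous_snd).mul continuous_fst).measurable
  have hind : Measurable (M.indicator (1 : ℂ → ℝ≥0∞)) := measurable_one.indicator hM
  have hg_meas : Measurable g := Measurable.lintegral_prod_right (hind.comp hm)
  have hrad : ∀ (z x : ℂ), ‖z‖ = 1 → g (z * x) = g x := by
    intro z x hz
    have hz' : e ((z.arg : ℝ) : AddCircle (2 * Real.pi)) = z := by
      rw [he_exp]
      have h := Complex.norm_mul_exp_arg_mul_I z
      rwa [hz, Complex.ofReal_one, one_mul] at h
    calc g (z * x) = ∫⁻ θ, M.indicator 1 (e (θ + ((z.arg : ℝ) : AddCircle (2 * Real.pi))) * x) := by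
          apply lintegral_congr
          intro θ
          rw [he_add, hz', mul_assoc]
      _ = g x := lintegral_add_right_eq_self (fun θ => M.indicator 1 (e θ * x)) _
  -- the exceptional set in the product space
  set S : Set (ℂ × AddCircle (2 * Real.pi)) :=
    symmDiff ((fun p : ℂ × AddCircle (2 * Real.pi) => e p.2 * p.1) ⁻¹' M)
      (Prod.fst ⁻¹' M) with hSdef
  have hS_meas : MeasurableSet S := (hm hM).symmDiff (measurable_fst hM)
  have hSnull : (volume.prod volume) S = 0 := by
    rw [MeasureTheory.Measure.prod_apply_symm hS_meas]
    have hslice : ∀ θ : AddCircle (2 * Real.pi), volume ((fun x : ℂ => (x, θ)) ⁻¹' S) = 0 := by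
      intro θ
      have heq : (fun x : ℂ => (x, θ)) ⁻¹' S
          = symmDiff ((fun x : ℂ => e θ * x) ⁻¹' M) M := by
        rw [hSdef, Set.preimage_symmDiff]; rfl
      rw [heq]
      exact hall _ (he_norm θ)
    simp only [hslice]
    simp
  have hae0 : ∀ᵐ x : ℂ, volume (Prod.mk x ⁻¹' S) = 0 := by
    have h := (MeasureTheory.Measure.measure_prod_null hS_meas).1 hSnull
    filter_upwards [h] with x hx using hx
  have hae : ∀ᵐ x : ℂ, g x = ENNReal.ofReal (2 * Real.pi) * M.indicator 1 x := by
    filter_upwards [hae0] with x hx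
    have hθ : ∀ᵐ θ : AddCircle (2 * Real.pi),
        M.indicator (1 : ℂ → ℝ≥0∞) (e θ * x) = M.indicator 1 x := by
      rw [ae_iff]
      refine measure_mono_null ?_ hx
      intro θ hθmem
      simp only [Set.mem_setOf_eq] at hθmem
      show (x, θ) ∈ S
      rw [hSdef, Set.mem_symmDiff]
      by_cases h1 : e θ * x ∈ M <;> by_cases h2 : x ∈ M
      · exact absurd (by simp [Set.indicator_of_mem, h1, h2]) hθmem
      · exact Or.inl ⟨h1, h2⟩
      · exact Or.inr ⟨h2, h1⟩
      · exact absurd (by simp [Set.indicator_of_notMem, h1, h2]) hθmem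
    calc g x = ∫⁻ _θ : AddCircle (2 * Real.pi), M.indicator 1 x := lintegral_congr_ae hθ
      _ = ENNReal.ofReal (2 * Real.pi) * M.indicator 1 x := by
          rw [lintegral_const, AddCircle.measure_univ, mul_comm]
  -- conclusion
  refine ⟨{r : ℝ | 0 ≤ r ∧ g (r : ℂ) = ENNReal.ofReal (2 * Real.pi)}, fun r hr => hr.1, ?_, ?_⟩
  · have hmr : Measurable fun r : ℝ => g ((r : ℝ) : ℂ) := hg_meas.comp Complex.measurable_ofReal
    have : {r : ℝ | 0 ≤ r ∧ g (r : ℂ) = ENNReal.ofReal (2 * Real.pi)}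
        = Set.Ici 0 ∩ ((fun r : ℝ => g ((r : ℝ) : ℂ)) ⁻¹' {ENNReal.ofReal (2 * Real.pi)}) := by
      ext r; simp [Set.mem_Ici]
    rw [this]
    exact measurableSet_Ici.inter (hmr (measurableSet_singleton _))
  · set c2π := ENNReal.ofReal (2 * Real.pi) with hc2π
    have hc2π0 : c2π ≠ 0 := by
      rw [hc2π]
      simpa using Real.two_pi_pos
    set N : Set ℂ := {x : ℂ | ¬ g x = c2π * M.indicator 1 x} with hN
    have hNnull : volume N = 0 := by
      rw [hN, ← ae_iff] at *
      exact hae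
    have hsub : symmDiff M {x : ℂ | ‖x‖ ∈ {r : ℝ | 0 ≤ r ∧ g (r : ℂ) = c2π}} ⊆ N ∪ {0} := by
      intro x hx
      rcases eq_or_ne x 0 with h0 | h0
      · exact Or.inr (by simp [h0])
      left
      rw [hN, Set.mem_setOf_eq]
      intro hgx
      have hxn0 : ‖x‖ ≠ 0 := norm_ne_zero_iff.2 h0
      have hzdiv : ‖x / (‖x‖ : ℂ)‖ = 1 := by
        rw [norm_div, Complex.norm_real, Real.norm_eq_abs, _root_.abs_of_nonneg (norm_nonneg x),
          div_self hxn0]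
      have hgr : g ((‖x‖ : ℝ) : ℂ) = g x := by
        conv_rhs => rw [show x = (x / (‖x‖ : ℂ)) * ((‖x‖ : ℝ) : ℂ) from
          (div_mul_cancel₀ x (by exact_mod_cast hxn0)).symm]
        rw [hrad _ _ hzdiv]
      rcases Set.mem_symmDiff.1 hx with ⟨hxM, hxR⟩ | ⟨hxR, hxM⟩
      · apply hxR
        refine ⟨norm_nonneg x, ?_⟩
        rw [hgr, hgx, Set.indicator_of_mem hxM]
        simp
      · have hR2 : g ((‖x‖ : ℝ) : ℂ) = c2π := hxR.2
        rw [hgr, hgx, Set.indicator_of_notMem hxM, mul_zero] at hR2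
        exact hc2π0 hR2.symm
    exact measure_mono_null hsub (measure_union_null hNnull (measure_singleton 0))

end Stmt0Aux

open Stmt0Aux Complex

/-- If `u, v` are unit vectors in the plane making an angle `α` with
`α / π` irrational, and `M` is a measurable set of finite measure that is symmetric
(up to measure zero) with respect to the lines `ℝ u` and `ℝ v`, then `M` is an annulus
centered at the origin: there is a measurable `M₀ ⊆ [0, ∞)` with
`λ (M Δ {x : ‖x‖ ∈ M₀}) = 0`. -/
theorem stmt_0 (u v : ℂ) (hu : ‖u‖ = 1) (hv : ‖v‖ = 1)
    (hangle : Irrational (angle u v / Real.pi))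
    (M : Set ℂ) (hM : MeasurableSet M) (hMfin : volume M < ⊤)
    (hsymu : volume (symmDiff (lineReflection u '' M) M) = 0)
    (hsymv : volume (symmDiff (lineReflection v '' M) M) = 0) :
    ∃ M₀ : Set ℝ, M₀ ⊆ Set.Ici 0 ∧ MeasurableSet M₀ ∧
      volume (symmDiff M {x : ℂ | ‖x‖ ∈ M₀}) = 0 := by
  classical
  set c : ℂ := v * (starRingEnd ℂ) u with hc
  have hcnorm : ‖c‖ = 1 := by
    rw [hc, norm_mul, hv, one_mul, RCLike.norm_conj, hu]
  have hc0 : c ≠ 0 := by intro h; rw [h] at hcnorm; simp at hcnorm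
  have hrefl_u : ∀ x, lineReflection u x = u ^ 2 * (starRingEnd ℂ) x := lineReflection_eq u hu
  have hrefl_v : ∀ x, lineReflection v x = v ^ 2 * (starRingEnd ℂ) x := lineReflection_eq v hv
  have hu2 : ‖u ^ 2‖ = 1 := by rw [norm_pow, hu, one_pow]
  have hv2 : ‖v ^ 2‖ = 1 := by rw [norm_pow, hv, one_pow]
  have hinv : ∀ w : ℂ, ‖w‖ = 1 → Function.Involutive (lineReflection w) := by
    intro w hw x
    have h1 : (starRingEnd ℂ) w * w = 1 := by
      rw [mul_comm, Complex.mul_conj]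
      have : Complex.normSq w = 1 := by
        rw [Complex.normSq_eq_norm_sq, hw]; norm_num
      rw [this, Complex.ofReal_one]
    rw [lineReflection_eq w hw, lineReflection_eq w hw, map_mul, Complex.conj_conj, map_pow]
    calc w ^ 2 * (((starRingEnd ℂ) w) ^ 2 * x) = ((starRingEnd ℂ) w * w) ^ 2 * x := by ring
      _ = x := by rw [h1, one_pow, one_mul]
  have hcont_v : Continuous (lineReflection v) := by
    rw [funext hrefl_v]
    exact continuous_const.mul Complex.continuous_conj
  have hcont_u : Continuous (lineReflection u) := by
    rw [funext hrefl_u]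
    exact continuous_const.mul Complex.continuous_conj
  have hMv_meas : MeasurableSet (lineReflection v ⁻¹' M) := hcont_v.measurable hM
  have hcomp : (fun x : ℂ => c ^ 2 * x) = lineReflection v ∘ lineReflection u := by
    funext x
    rw [Function.comp_apply, hrefl_u, hrefl_v, hc, map_mul, map_pow, Complex.conj_conj]
    ring
  have hiu : volume (symmDiff (lineReflection u ⁻¹' M) M) = 0 := by
    rw [← Set.image_eq_preimage_of_inverse (hinv u hu) (hinv u hu)]
    exact hsymu
  have hiv : volume (symmDiff (lineReflection v ⁻¹' M) M) = 0 := by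
    rw [← Set.image_eq_preimage_of_inverse (hinv v hv) (hinv v hv)]
    exact hsymv
  have hFw : FF M (c ^ 2) = 0 := by
    refine le_antisymm ?_ zero_le
    have hpre : (fun x : ℂ => c ^ 2 * x) ⁻¹' M
        = lineReflection u ⁻¹' (lineReflection v ⁻¹' M) := by
      rw [hcomp]; rfl
    have step1 := measure_symmDiff_le (μ := volume) ((fun x : ℂ => c ^ 2 * x) ⁻¹' M)
      (lineReflection u ⁻¹' M) M
    have hA : volume (symmDiff ((fun x : ℂ => c ^ 2 * x) ⁻¹' M) (lineReflection u ⁻¹' M))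
        = volume (symmDiff (lineReflection v ⁻¹' M) M) := by
      rw [hpre, ← Set.preimage_symmDiff]
      have hXmeas : MeasurableSet (symmDiff (lineReflection v ⁻¹' M) M) :=
        hMv_meas.symmDiff hM
      rw [funext hrefl_u]
      exact vol_preimage_mul_conj hu2 hXmeas
    calc FF M (c ^ 2) ≤ _ + _ := step1
      _ = 0 := by rw [hA, hiv, hiu, add_zero]
  have hang : angle u v = |c.arg| := by
    unfold InnerProductGeometry.angle
    rw [hu, hv, one_mul, div_one]
    have h1 : (inner ℝ u v : ℝ) = c.re := by
      rw [Complex.inner, hc, mul_comm]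
    rw [h1]
    have h2 : c.re = Real.cos c.arg := by
      have h := Complex.cos_arg hc0
      rw [hcnorm, div_one] at h
      exact h.symm
    rw [h2]
    rcases le_or_gt 0 c.arg with h | h
    · rw [_root_.abs_of_nonneg h, Real.arccos_cos h (Complex.arg_le_pi c)]
    · rw [_root_.abs_of_neg h, ← Real.cos_neg,
        Real.arccos_cos (by linarith) (by have := Complex.neg_pi_lt_arg c; linarith)]
  have hirr : Irrational ((2 * c.arg) / (2 * Real.pi)) := by
    have h1 : (2 * c.arg) / (2 * Real.pi) = c.arg / Real.pi :=
      mul_div_mul_left _ _ two_ne_zero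
    rw [h1]
    rcases le_or_gt 0 c.arg with h | h
    · rwa [hang, _root_.abs_of_nonneg h] at hangle
    · rw [hang, _root_.abs_of_neg h, neg_div] at hangle
      simpa using hangle.neg
  have hexp : Complex.exp (↑(2 * c.arg) * I) = c ^ 2 := by
    have h1 : Complex.exp (↑c.arg * I) = c := by
      have h := Complex.norm_mul_exp_arg_mul_I c
      rwa [hcnorm, Complex.ofReal_one, one_mul] at h
    rw [show ((2 * c.arg : ℝ) : ℂ) * I = ↑c.arg * I + ↑c.arg * I by push_cast; ring,
      Complex.exp_add, h1, sq]
  have hall := FF_all_zero hM hMfin hirr (by rw [hexp]; exact hFw)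
  exact annulus_of_rot_invariant M hM fun z hz => hall z hz
end

section
/- Let α ∈ ℝ be such that α/π is irrational, and let R_α denote the rotation of ℝ² about the origin by angle α. Let M ⊆ ℝ² be a Lebesgue measurable set with λ(R_α(M) Δ M) = 0. If z ∈ ℝ² is a point of Lebesgue density 1 for M, then every point w ∈ ℝ² with ‖w‖ = ‖z‖ is also a point of Lebesgue density 1 for M. -/
open MeasureTheory Filter Topology

/-- A point `z` of the plane `ℝ² ≃ ℂ` is a point of Lebesgue density 1 for `M` if
`λ(M ∩ B(z,r)) / λ(B(z,r)) → 1` as `r → 0⁺`. -/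
def IsDensityOnePoint (M : Set ℂ) (z : ℂ) : Prop :=
  Tendsto (fun r : ℝ => volume (M ∩ Metric.ball z r) / volume (Metric.ball z r))
    (𝓝[>] 0) (𝓝 1)

section Aux

open Complex Metric Set

/-- Multiplication by a unit-circle element is measure preserving on `ℂ`. -/
lemma rot_measurePreserving (u : Circle) :
    MeasurePreserving (fun z : ℂ => (u : ℂ) * z) volume volume :=
  (rotation u).measurePreserving

lemma rot_measurable (c : ℂ) : Measurable (fun z : ℂ => c * z) :=
  (continuous_const.mul continuous_id).measurable

lemma rot_preimage_ball (u : Circle) (x : ℂ) (r : ℝ) :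
    (fun z : ℂ => (u : ℂ) * z) ⁻¹' (ball ((u : ℂ) * x) r) = ball x r := by
  ext y
  simp only [mem_preimage, mem_ball, Complex.dist_eq, ← mul_sub, norm_mul, Circle.norm_coe, one_mul]

lemma rot_preimage_comp (u v : Circle) (M : Set ℂ) :
    (fun z : ℂ => ((u * v : Circle) : ℂ) * z) ⁻¹' M
      = (fun z : ℂ => (v : ℂ) * z) ⁻¹' ((fun z : ℂ => (u : ℂ) * z) ⁻¹' M) := by
  ext y
  simp [mem_preimage, mul_assoc]

/-- The subgroup of circle rotations leaving `M` invariant up to null sets. -/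
noncomputable def invSubgroup (M : Set ℂ) (hM : MeasurableSet M) : Subgroup Circle where
  carrier := {u : Circle | volume (symmDiff ((fun z : ℂ => (u : ℂ) * z) ⁻¹' M) M) = 0}
  one_mem' := by
    have : (fun z : ℂ => ((1 : Circle) : ℂ) * z) ⁻¹' M = M := by
      ext y; simp
    simp [this, symmDiff_self]
    exact ae_eq_refl _
  mul_mem' := by
    intro u v hu hv
    have hA : MeasurableSet ((fun z : ℂ => (u : ℂ) * z) ⁻¹' M) := (rot_measurable _) hM
    have h1 : volume (symmDiff ((fun z : ℂ => ((u * v : Circle) : ℂ) * z) ⁻¹' M)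
        ((fun z : ℂ => (v : ℂ) * z) ⁻¹' M)) = 0 := by
      rw [rot_preimage_comp, ← Set.preimage_symmDiff]
      rw [(rot_measurePreserving v).measure_preimage
        ((hA.symmDiff hM).nullMeasurableSet)]
      exact hu
    have hle : volume (symmDiff ((fun z : ℂ => ((u * v : Circle) : ℂ) * z) ⁻¹' M) M) ≤ 0 :=
      calc volume (symmDiff ((fun z : ℂ => ((u * v : Circle) : ℂ) * z) ⁻¹' M) M)
        ≤ volume (symmDiff ((fun z : ℂ => ((u * v : Circle) : ℂ) * z) ⁻¹' M)
            ((fun z : ℂ => (v : ℂ) * z) ⁻¹' M))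
          + volume (symmDiff ((fun z : ℂ => (v : ℂ) * z) ⁻¹' M) M) :=
          measure_symmDiff_le _ _ _
      _ = 0 := by rw [h1, hv, add_zero]
    exact le_antisymm hle (zero_le)
  inv_mem' := by
    intro u hu
    have hA : MeasurableSet ((fun z : ℂ => ((u⁻¹ : Circle) : ℂ) * z) ⁻¹' M) :=
      (rot_measurable _) hM
    have h0 : (fun z : ℂ => (u : ℂ) * z) ⁻¹' ((fun z : ℂ => ((u⁻¹ : Circle) : ℂ) * z) ⁻¹' M)
        = M := by
      rw [← rot_preimage_comp, inv_mul_cancel]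
      ext y; simp
    have := (rot_measurePreserving u).measure_preimage
      (s := symmDiff ((fun z : ℂ => ((u⁻¹ : Circle) : ℂ) * z) ⁻¹' M) M)
      ((hA.symmDiff hM).nullMeasurableSet)
    rw [Set.preimage_symmDiff, h0] at this
    show volume (symmDiff ((fun z : ℂ => ((u⁻¹ : Circle) : ℂ) * z) ⁻¹' M) M) = 0
    rw [← this, symmDiff_comm]
    exact hu

/-- Measure of `M ∩ ball` is invariant under a null-invariance rotation. -/
lemma meas_inter_ball_eq (M : Set ℂ) (hM : MeasurableSet M) (u : Circle)
    (hu : volume (symmDiff ((fun z : ℂ => (u : ℂ) * z) ⁻¹' M) M) = 0) (x : ℂ) (r : ℝ) :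
    volume (M ∩ ball ((u : ℂ) * x) r) = volume (M ∩ ball x r) := by
  have h1 : volume ((fun z : ℂ => (u : ℂ) * z) ⁻¹' (M ∩ ball ((u : ℂ) * x) r))
      = volume (M ∩ ball ((u : ℂ) * x) r) :=
    (rot_measurePreserving u).measure_preimage
      ((hM.inter measurableSet_ball).nullMeasurableSet)
  rw [Set.preimage_inter, rot_preimage_ball] at h1
  rw [← h1]
  have hae : (fun z : ℂ => (u : ℂ) * z) ⁻¹' M =ᵐ[volume] M :=
    measure_symmDiff_eq_zero_iff.1 hu
  exact measure_congr (hae.inter (ae_eq_refl _))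

lemma exp_zsmul' (m : ℤ) (x : ℝ) : Circle.exp (m • x) = Circle.exp x ^ m := by
  induction m using Int.induction_on with
  | zero => simp
  | succ n ih =>
      have h : ((n : ℤ) + 1) • x = (n : ℤ) • x + x := by
        simp only [zsmul_eq_mul]; push_cast; ring
      rw [h, Circle.exp_add, ih, zpow_add_one]
  | pred n ih =>
      have h : (-(n : ℤ) - 1) • x = (-(n : ℤ)) • x - x := by
        simp only [zsmul_eq_mul]; push_cast; ring
      rw [h, Circle.exp_sub, ih, zpow_sub_one, div_eq_mul_inv]

/-- The subgroup `ℤα + ℤ2π` is dense in `ℝ` when `α/π` is irrational. -/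
lemma dense_zmul_add (α : ℝ) (hα : Irrational (α / Real.pi)) :
    Dense ((AddSubgroup.zmultiples α ⊔ AddSubgroup.zmultiples (2 * Real.pi)
      : AddSubgroup ℝ) : Set ℝ) := by
  rcases AddSubgroup.dense_or_cyclic
      (AddSubgroup.zmultiples α ⊔ AddSubgroup.zmultiples (2 * Real.pi)) with h | ⟨a, ha⟩
  · exact h
  · exfalso
    have hαmem : α ∈ AddSubgroup.closure ({a} : Set ℝ) := by
      rw [← ha]
      exact AddSubgroup.mem_sup_left (AddSubgroup.mem_zmultiples α)
    have hπmem : 2 * Real.pi ∈ AddSubgroup.closure ({a} : Set ℝ) := by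
      rw [← ha]
      exact AddSubgroup.mem_sup_right (AddSubgroup.mem_zmultiples _)
    rw [AddSubgroup.mem_closure_singleton] at hαmem hπmem
    obtain ⟨m, hm⟩ := hαmem
    obtain ⟨k, hk⟩ := hπmem
    rw [zsmul_eq_mul] at hm hk
    have hπ : Real.pi ≠ 0 := Real.pi_ne_zero
    have hk0 : (k : ℝ) ≠ 0 := by
      intro h
      rw [h, zero_mul] at hk
      exact hπ (by linarith)
    have ha0 : a ≠ 0 := by
      intro h
      rw [h, mul_zero] at hk
      exact hπ (by linarith)
    apply hα
    refine ⟨2 * m / k, ?_⟩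
    push_cast
    rw [div_eq_div_iff (by exact_mod_cast hk0) hπ]
    linear_combination (k : ℝ) * hm - (m : ℝ) * hk

end Aux

/-- Let `α/π` be irrational and let `R_α z = e^{iα} z` be the rotation
of the plane about the origin by angle `α`. If `M` is measurable with
`λ(R_α(M) Δ M) = 0` and `z` is a point of Lebesgue density 1 for `M`, then every point
`w` with `‖w‖ = ‖z‖` is also a point of Lebesgue density 1 for `M`. -/
theorem stmt_1 (α : ℝ) (hα : Irrational (α / Real.pi))
    (M : Set ℂ) (hM : MeasurableSet M)
    (hrot : volume (symmDiff ((fun z : ℂ => Complex.exp (α * Complex.I) * z) '' M) M) = 0)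
    (z : ℂ) (hz : IsDensityOnePoint M z)
    (w : ℂ) (hw : ‖w‖ = ‖z‖) :
    IsDensityOnePoint M w := by
  classical
  by_cases hz0 : z = 0
  · have hw0 : w = 0 := by
      rw [← norm_eq_zero, hw, hz0, norm_zero]
    rw [hw0, ← hz0]; rwa [hz0] at hz ⊢
  -- setup the rotation
  set a : Circle := Circle.exp α with ha_def
  have hacoe : (a : ℂ) = Complex.exp (α * Complex.I) := by
    rw [ha_def, Circle.coe_exp]
  -- `a⁻¹` leaves `M` invariant (preimage formulation), hence `a` does
  have hainv : a⁻¹ ∈ invSubgroup M hM := by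
    show volume (symmDiff ((fun z : ℂ => ((a⁻¹ : Circle) : ℂ) * z) ⁻¹' M) M) = 0
    have himg : (fun z : ℂ => Complex.exp (α * Complex.I) * z) '' M
        = (fun z : ℂ => ((a⁻¹ : Circle) : ℂ) * z) ⁻¹' M := by
      ext x
      simp only [Set.mem_image, Set.mem_preimage, Circle.coe_inv, ← hacoe]
      constructor
      · rintro ⟨v, hv, rfl⟩
        rwa [inv_mul_cancel_left₀ (Circle.coe_ne_zero a)]
      · intro h
        exact ⟨(a : ℂ)⁻¹ * x, h, mul_inv_cancel_left₀ (Circle.coe_ne_zero a) x⟩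
    rw [← himg]
    exact hrot
  have hamem : a ∈ invSubgroup M hM := by
    have := (invSubgroup M hM).inv_mem hainv
    rwa [inv_inv] at this
  -- key invariance of measures of intersections with balls
  have key : ∀ m : ℤ, ∀ x : ℂ, ∀ r : ℝ,
      volume (M ∩ Metric.ball (((a ^ m : Circle) : ℂ) * x) r)
        = volume (M ∩ Metric.ball x r) := by
    intro m x r
    exact meas_inter_ball_eq M hM (a ^ m) ((invSubgroup M hM).zpow_mem hamem m) x r
  -- the target angle
  have hznorm : (0 : ℝ) < ‖z‖ := norm_pos_iff.2 hz0
  set θ : ℝ := (w / z).arg with hθ_def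
  have hθ : Complex.exp ((θ : ℂ) * Complex.I) * z = w := by
    have habs : ‖w / z‖ = 1 := by
      rw [norm_div]
      rw [hw, div_self hznorm.ne']
    have := Complex.norm_mul_exp_arg_mul_I (w / z)
    rw [habs, Complex.ofReal_one, one_mul] at this
    rw [← hθ_def] at this
    rw [this, div_mul_cancel₀ _ hz0]
  -- approximation of `w` by points in the orbit of `z`
  have approx : ∀ ε : ℝ, 0 < ε → ∃ m : ℤ,
      dist (((a ^ m : Circle) : ℂ) * z) w ≤ ε := by
    intro ε hε
    set η : ℝ := min (ε / (2 * ‖z‖)) 1 with hη_def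
    have hη0 : 0 < η := lt_min (by positivity) one_pos
    obtain ⟨s, hs⟩ := Metric.dense_iff.1 (dense_zmul_add α hα) θ η hη0
    obtain ⟨hsball, hsmem⟩ := hs
    rw [SetLike.mem_coe, AddSubgroup.mem_sup] at hsmem
    obtain ⟨y, hy, v, hv, hyv⟩ := hsmem
    obtain ⟨m, hm⟩ := AddSubgroup.mem_zmultiples_iff.1 hy
    obtain ⟨k, hk⟩ := AddSubgroup.mem_zmultiples_iff.1 hv
    have hexp : Circle.exp s = a ^ m := by
      rw [← hyv, Circle.exp_add, ← hm, ← hk, exp_zsmul', zsmul_eq_mul,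
        Circle.exp_int_mul_two_pi, mul_one, ha_def]
    refine ⟨m, ?_⟩
    have hdist : |s - θ| < η := by
      rw [Metric.mem_ball, Real.dist_eq] at hsball
      exact hsball
    have h1 : |s - θ| ≤ 1 := le_of_lt (lt_of_lt_of_le hdist (min_le_right _ _))
    have h2 : |s - θ| ≤ ε / (2 * ‖z‖) := le_of_lt (lt_of_lt_of_le hdist (min_le_left _ _))
    have hfact : Complex.exp ((s : ℂ) * Complex.I) - Complex.exp ((θ : ℂ) * Complex.I)
        = Complex.exp ((θ : ℂ) * Complex.I)
          * (Complex.exp ((((s - θ) : ℝ) : ℂ) * Complex.I) - 1) := by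
      rw [mul_sub, mul_one, ← Complex.exp_add]
      push_cast
      ring_nf
    have habsI : ‖(((s - θ) : ℝ) : ℂ) * Complex.I‖ = |s - θ| := by
      rw [norm_mul, Complex.norm_I, mul_one, Complex.norm_real, Real.norm_eq_abs]
    have hball : ‖Complex.exp ((((s - θ) : ℝ) : ℂ) * Complex.I) - 1‖
        ≤ 2 * |s - θ| := by
      have := Complex.norm_exp_sub_one_le (x := (((s - θ) : ℝ) : ℂ) * Complex.I)
        (by rw [habsI]; exact h1)
      rwa [habsI] at this
    have hcoe : ((a ^ m : Circle) : ℂ) = Complex.exp ((s : ℂ) * Complex.I) := by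
      rw [← hexp, Circle.coe_exp]
    calc dist (((a ^ m : Circle) : ℂ) * z) w
        = ‖Complex.exp ((s : ℂ) * Complex.I) - Complex.exp ((θ : ℂ) * Complex.I)‖
          * ‖z‖ := by
          rw [← hθ, hcoe, Complex.dist_eq, ← sub_mul, norm_mul]
      _ ≤ (2 * |s - θ|) * ‖z‖ := by
          apply mul_le_mul_of_nonneg_right _ (norm_nonneg z)
          calc ‖Complex.exp ((s : ℂ) * Complex.I)
              - Complex.exp ((θ : ℂ) * Complex.I)‖
              = ‖Complex.exp ((θ : ℂ) * Complex.I)‖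
                * ‖Complex.exp ((((s - θ) : ℝ) : ℂ) * Complex.I) - 1‖ := by
                rw [hfact, norm_mul]
            _ = ‖Complex.exp ((((s - θ) : ℝ) : ℂ) * Complex.I) - 1‖ := by
                rw [Complex.norm_exp_ofReal_mul_I, one_mul]
            _ ≤ 2 * |s - θ| := hball
      _ ≤ (2 * (ε / (2 * ‖z‖))) * ‖z‖ := by
          apply mul_le_mul_of_nonneg_right _ (norm_nonneg z)
          linarith
      _ = ε := by
          have hne : ‖z‖ ≠ 0 := hznorm.ne'
          field_simp
  -- main quantitative lower bound
  have main : ∀ δ : ℝ, 0 < δ → δ < 1 →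
      ∀ᶠ r in 𝓝[>] (0 : ℝ),
        ENNReal.ofReal ((1 - δ) ^ 3) * volume (Metric.ball w r)
          ≤ volume (M ∩ Metric.ball w r) := by
    intro δ hδ0 hδ1
    have hoflt : ENNReal.ofReal (1 - δ) < 1 := ENNReal.ofReal_lt_one.2 (by linarith)
    have hz' := hz.eventually_const_lt hoflt
    rw [eventually_iff, mem_nhdsGT_iff_exists_Ioo_subset] at hz'
    obtain ⟨r₀, hr₀, hIoo⟩ := hz'
    rw [eventually_iff, mem_nhdsGT_iff_exists_Ioo_subset]
    refine ⟨r₀, hr₀, ?_⟩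
    intro r hr
    obtain ⟨hrpos, hrlt⟩ := hr
    simp only [Set.mem_setOf_eq]
    -- choose a good orbit point
    obtain ⟨m, hm⟩ := approx (δ * r) (by positivity)
    set z' : ℂ := ((a ^ m : Circle) : ℂ) * z with hz'_def
    have hsubset : Metric.ball z' ((1 - δ) * r) ⊆ Metric.ball w r := by
      intro x hx
      rw [Metric.mem_ball] at hx ⊢
      calc dist x w ≤ dist x z' + dist z' w := dist_triangle x z' w
        _ < (1 - δ) * r + δ * r := by
            apply add_lt_add_of_lt_of_le hx hm
        _ = r := by ring
    have hρpos : 0 < (1 - δ) * r := mul_pos (by linarith) hrpos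
    have hρlt : (1 - δ) * r < r₀ := by nlinarith
    have hzr := hIoo ⟨hρpos, hρlt⟩
    simp only [Set.mem_setOf_eq] at hzr
    -- volume of ball at z of radius (1-δ)r is positive & finite
    have hV0 : volume (Metric.ball z ((1 - δ) * r)) ≠ 0 :=
      (Metric.measure_ball_pos volume z hρpos).ne'
    have hVtop : volume (Metric.ball z ((1 - δ) * r)) ≠ ⊤ := by
      rw [Complex.volume_ball]
      exact ENNReal.mul_ne_top (ENNReal.pow_ne_top ENNReal.ofReal_ne_top) ENNReal.coe_ne_top
    have hstep : ENNReal.ofReal (1 - δ) * volume (Metric.ball z ((1 - δ) * r))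
        ≤ volume (M ∩ Metric.ball z ((1 - δ) * r)) :=
      (ENNReal.le_div_iff_mul_le (Or.inl hV0) (Or.inl hVtop)).1 hzr.le
    have hvol_eq : ENNReal.ofReal (1 - δ) * volume (Metric.ball z ((1 - δ) * r))
        = ENNReal.ofReal ((1 - δ) ^ 3) * volume (Metric.ball w r) := by
      rw [Complex.volume_ball, Complex.volume_ball,
        ENNReal.ofReal_mul (by linarith : (0:ℝ) ≤ 1 - δ),
        ENNReal.ofReal_pow (by linarith : (0:ℝ) ≤ 1 - δ)]
      ring
    calc ENNReal.ofReal ((1 - δ) ^ 3) * volume (Metric.ball w r)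
        = ENNReal.ofReal (1 - δ) * volume (Metric.ball z ((1 - δ) * r)) := hvol_eq.symm
      _ ≤ volume (M ∩ Metric.ball z ((1 - δ) * r)) := hstep
      _ = volume (M ∩ Metric.ball z' ((1 - δ) * r)) := (key m z ((1 - δ) * r)).symm
      _ ≤ volume (M ∩ Metric.ball w r) :=
          measure_mono (Set.inter_subset_inter_right M hsubset)
  -- conclude via the order characterization of tendsto
  rw [IsDensityOnePoint]
  refine tendsto_order.2 ⟨?_, ?_⟩
  · intro c hc
    have hctop : c ≠ ⊤ := hc.trans_le le_top |>.ne
    set c' : ℝ := c.toReal with hc'_def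
    have hc'0 : 0 ≤ c' := ENNReal.toReal_nonneg
    have hc'1 : c' < 1 := by
      have := (ENNReal.toReal_lt_toReal hctop ENNReal.one_ne_top).2 hc
      simpa using this
    set δ : ℝ := (1 - c') / 4 with hδ_def
    have hδ0 : 0 < δ := by rw [hδ_def]; linarith
    have hδ1 : δ < 1 := by rw [hδ_def]; linarith
    have hc'δ : c' = 1 - 4 * δ := by rw [hδ_def]; ring
    have hclt : c < ENNReal.ofReal ((1 - δ) ^ 3) := by
      have hc_eq : c = ENNReal.ofReal c' := by
        rw [hc'_def, ENNReal.ofReal_toReal hctop]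
      rw [hc_eq]
      apply ENNReal.ofReal_lt_ofReal_iff (pow_pos (by linarith : (0:ℝ) < 1 - δ) 3) |>.2
      nlinarith [hc'δ, hδ0, hδ1, mul_pos hδ0 hδ0, mul_pos (mul_pos hδ0 hδ0) hδ0]
    filter_upwards [main δ hδ0 hδ1, self_mem_nhdsWithin] with r hr hrpos
    have hrpos' : (0 : ℝ) < r := hrpos
    have hV0 : volume (Metric.ball w r) ≠ 0 :=
      (Metric.measure_ball_pos volume w hrpos').ne'
    have hVtop : volume (Metric.ball w r) ≠ ⊤ := by
      rw [Complex.volume_ball]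
      exact ENNReal.mul_ne_top (ENNReal.pow_ne_top ENNReal.ofReal_ne_top) ENNReal.coe_ne_top
    calc c < ENNReal.ofReal ((1 - δ) ^ 3) := hclt
      _ ≤ volume (M ∩ Metric.ball w r) / volume (Metric.ball w r) :=
          (ENNReal.le_div_iff_mul_le (Or.inl hV0) (Or.inl hVtop)).2 hr
  · intro c hc
    filter_upwards with r
    refine lt_of_le_of_lt ?_ hc
    apply ENNReal.div_le_of_le_mul
    rw [one_mul]
    exact measure_mono Set.inter_subset_right
end

section
/- Let γ = (√5 − 1)/2 and let {γⁿω} be Kakutani's γ-sequence of partitions of [0,1]. Then for every n ≥ 0, every interval of the partition γⁿω has length either γⁿ or γ^{n+1}; moreover γⁿω consists of exactly F_{n+2} intervals, of which F_{n+1} have length γⁿ and F_n have length γ^{n+1}, where {F_k} is the Fibonacci sequence with F_0 = 0, F_1 = F_2 = 1. -/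
open scoped Classical

/-- A partition of `[0,1]` is modelled as the finite set of the pairs `(a, b)` of
endpoints of its intervals `[a, b]`.  The Kakutani `α`-refinement of a partition `P`
splits every interval of `P` of maximal length in the proportion `α : (1 - α)`. -/
noncomputable def kakutaniRefine (α : ℝ) (P : Finset (ℝ × ℝ)) : Finset (ℝ × ℝ) :=
  let m : ℝ := ((P.image fun p => p.2 - p.1).max).unbotD 0
  (P.filter fun p => p.2 - p.1 < m) ∪
    ((P.filter fun p => p.2 - p.1 = m).image fun p => (p.1, p.1 + α * (p.2 - p.1))) ∪
    ((P.filter fun p => p.2 - p.1 = m).image fun p => (p.1 + α * (p.2 - p.1), p.2))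

/-- Kakutani's `α`-sequence of partitions: `αⁿω` is the `n`-fold `α`-refinement of the
trivial partition `ω = {[0,1]}` of `[0,1]`. -/
noncomputable def kakutaniPartition (α : ℝ) : ℕ → Finset (ℝ × ℝ)
  | 0 => {((0 : ℝ), (1 : ℝ))}
  | n + 1 => kakutaniRefine α (kakutaniPartition α n)

lemma kakutani_key (γ : ℝ) (hγ0 : 0 < γ) (hγ1 : γ < 1) (hγq : γ * γ = 1 - γ) (n : ℕ) :
    (∀ p ∈ kakutaniPartition γ n, p.2 - p.1 = γ ^ n ∨ p.2 - p.1 = γ ^ (n + 1)) ∧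
    ((kakutaniPartition γ n).filter fun p => p.2 - p.1 = γ ^ n).card = Nat.fib (n + 1) ∧
    ((kakutaniPartition γ n).filter fun p => p.2 - p.1 = γ ^ (n + 1)).card = Nat.fib n ∧
    (∀ p ∈ kakutaniPartition γ n, ∀ q ∈ kakutaniPartition γ n, p ≠ q → p.2 ≤ q.1 ∨ q.2 ≤ p.1) := by
  induction n with
  | zero =>
    refine ⟨?_, ?_, ?_, ?_⟩
    · intro p hp
      simp only [kakutaniPartition, Finset.mem_singleton] at hp
      subst hp; left; norm_num
    · show ((({((0:ℝ),(1:ℝ))} : Finset (ℝ × ℝ))).filter _).card = _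
      rw [Finset.filter_singleton]
      norm_num
    · show ((({((0:ℝ),(1:ℝ))} : Finset (ℝ × ℝ))).filter _).card = _
      rw [Finset.filter_singleton, if_neg]
      · simp
      · simp only [pow_one]
        intro h
        norm_num at h
        exact absurd h (ne_of_gt hγ1)
    · intro p hp q hq hpq
      simp only [kakutaniPartition, Finset.mem_singleton] at hp hq
      exact absurd (hp.trans hq.symm) hpq
  | succ n ih =>
    obtain ⟨hlen, hS, hT, hdisj⟩ := ih
    set P := kakutaniPartition γ n with hP
    have hγn : (0:ℝ) < γ ^ n := pow_pos hγ0 n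
    have hlt : γ ^ (n+1) < γ ^ n := by
      have := mul_lt_mul_of_pos_right hγ1 hγn
      calc γ ^ (n+1) = γ * γ ^ n := by ring
      _ < 1 * γ ^ n := this
      _ = γ ^ n := one_mul _
    have hlt2 : γ ^ (n+2) < γ ^ (n+1) := by
      have := mul_lt_mul_of_pos_right hγ1 (pow_pos hγ0 (n+1))
      calc γ ^ (n+2) = γ * γ ^ (n+1) := by ring
      _ < 1 * γ ^ (n+1) := this
      _ = γ ^ (n+1) := one_mul _
    have hne : γ ^ (n+1) ≠ γ ^ n := ne_of_lt hlt
    have hne2 : γ ^ (n+2) ≠ γ ^ (n+1) := ne_of_lt hlt2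
    have hpos : ∀ p ∈ P, p.1 < p.2 := by
      intro p hp
      rcases hlen p hp with h | h <;>
        nlinarith [pow_pos hγ0 n, pow_pos hγ0 (n+1)]
    have hleft : ∀ p ∈ P, ∀ q ∈ P, p.1 = q.1 → p = q := by
      intro p hp q hq h
      by_contra hne'
      rcases hdisj p hp q hq hne' with h1 | h1
      · exact absurd (lt_of_lt_of_le (hpos p hp) h1) (by rw [h]; exact lt_irrefl _)
      · exact absurd (lt_of_lt_of_le (hpos q hq) h1) (by rw [h]; exact lt_irrefl _)
    obtain ⟨w, hwP, hwlen⟩ : ∃ p ∈ P, p.2 - p.1 = γ ^ n := by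
      have hne3 : (P.filter fun p => p.2 - p.1 = γ ^ n).Nonempty := by
        rw [← Finset.card_pos, hS]; exact Nat.fib_pos.2 (Nat.succ_pos n)
      obtain ⟨p, hp⟩ := hne3
      exact ⟨p, (Finset.mem_filter.1 hp).1, (Finset.mem_filter.1 hp).2⟩
    have hm : ((P.image fun p => p.2 - p.1).max).unbotD 0 = γ ^ n := by
      have h1 : (P.image fun p => p.2 - p.1).max = ((γ ^ n : ℝ) : WithBot ℝ) := by
        apply le_antisymm
        · apply Finset.max_le
          intro b hb
          obtain ⟨p, hp, rfl⟩ := Finset.mem_image.1 hb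
          refine WithBot.coe_le_coe.2 ?_
          rcases hlen p hp with h | h
          · exact le_of_eq h
          · exact h ▸ le_of_lt hlt
        · exact Finset.le_max (Finset.mem_image.2 ⟨w, hwP, hwlen⟩)
      rw [h1]; rfl
    set S : Finset (ℝ × ℝ) := P.filter fun p => p.2 - p.1 = γ ^ n with hSdef
    set A : Finset (ℝ × ℝ) := P.filter fun p => p.2 - p.1 < γ ^ n with hAdef
    set B : Finset (ℝ × ℝ) := S.image fun p => (p.1, p.1 + γ * (p.2 - p.1)) with hBdef
    set C : Finset (ℝ × ℝ) := S.image fun p => (p.1 + γ * (p.2 - p.1), p.2) with hCdef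
    have hQ : kakutaniPartition γ (n+1) = A ∪ B ∪ C := by
      show kakutaniRefine γ P = _
      rw [kakutaniRefine]
      simp only [hm]
      rfl
    have hAeq : A = P.filter fun p => p.2 - p.1 = γ ^ (n+1) := by
      ext p
      simp only [hAdef, Finset.mem_filter]
      constructor
      · rintro ⟨hp, hlt'⟩
        rcases hlen p hp with h | h
        · exact absurd h (ne_of_lt hlt')
        · exact ⟨hp, h⟩
      · rintro ⟨hp, h⟩
        exact ⟨hp, h ▸ hlt⟩
    -- lengths of members
    have hlenA : ∀ p ∈ A, p.2 - p.1 = γ ^ (n+1) := by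
      intro p hp; rw [hAeq] at hp; exact (Finset.mem_filter.1 hp).2
    have hlenB : ∀ p ∈ B, p.2 - p.1 = γ ^ (n+1) := by
      intro p hp
      obtain ⟨q, hq, rfl⟩ := Finset.mem_image.1 hp
      have := (Finset.mem_filter.1 hq).2
      show q.1 + γ * (q.2 - q.1) - q.1 = γ ^ (n+1)
      rw [this, pow_succ]
      ring
    have hlenC : ∀ p ∈ C, p.2 - p.1 = γ ^ (n+2) := by
      intro p hp
      obtain ⟨q, hq, rfl⟩ := Finset.mem_image.1 hp
      have hq2 := (Finset.mem_filter.1 hq).2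
      show q.2 - (q.1 + γ * (q.2 - q.1)) = γ ^ (n+2)
      linear_combination (1 - γ) * hq2 - γ ^ n * hγq
    -- injectivity / cards
    have hcardB : B.card = Nat.fib (n+1) := by
      rw [hBdef, Finset.card_image_of_injOn, hS]
      intro p hp q hq hpq
      have hpq' : (p.1, p.1 + γ * (p.2 - p.1)) = (q.1, q.1 + γ * (q.2 - q.1)) := hpq
      have h1 : p.1 = q.1 := (Prod.mk.inj hpq').1
      exact hleft p (Finset.mem_filter.1 hp).1 q (Finset.mem_filter.1 hq).1 h1
    have hcardC : C.card = Nat.fib (n+1) := by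
      rw [hCdef, Finset.card_image_of_injOn, hS]
      intro p hp q hq hpq
      have hp2 := (Finset.mem_filter.1 hp).2
      have hq2 := (Finset.mem_filter.1 hq).2
      have hpq' : (p.1 + γ * (p.2 - p.1), p.2) = (q.1 + γ * (q.2 - q.1), q.2) := hpq
      have h1 : p.1 + γ * (p.2 - p.1) = q.1 + γ * (q.2 - q.1) := (Prod.mk.inj hpq').1
      rw [hp2, hq2] at h1
      have h1' : p.1 = q.1 := by linarith
      exact hleft p (Finset.mem_filter.1 hp).1 q (Finset.mem_filter.1 hq).1 h1'
    have hcardA : A.card = Nat.fib n := by rw [hAeq]; exact hT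
    -- disjointness of A, B, C
    have hAB : Disjoint A B := by
      rw [Finset.disjoint_left]
      intro p hpA hpB
      obtain ⟨q, hq, hpq⟩ := Finset.mem_image.1 hpB
      have hqP := (Finset.mem_filter.1 hq).1
      have hq2 := (Finset.mem_filter.1 hq).2
      have hpP := (Finset.mem_filter.1 (hAeq ▸ hpA)).1
      have h1 : p.1 = q.1 := by rw [← hpq]
      have : p = q := hleft p hpP q hqP h1
      rw [this] at hpA
      exact hne ((hlenA q (this ▸ hpA)).symm.trans hq2 ▸ rfl) |>.elim
    have hAC : Disjoint A C := by
      rw [Finset.disjoint_left]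
      intro p hpA hpC
      exact hne2 ((hlenC p hpC).symm.trans (hlenA p hpA))
    have hBC : Disjoint B C := by
      rw [Finset.disjoint_left]
      intro p hpB hpC
      exact hne2 ((hlenC p hpC).symm.trans (hlenB p hpB))
    -- filter identification on the union
    have hfilt1 : (kakutaniPartition γ (n+1)).filter (fun p => p.2 - p.1 = γ ^ (n+1)) = A ∪ B := by
      rw [hQ]
      ext p
      constructor
      · intro hp
        obtain ⟨hmem, hl⟩ := Finset.mem_filter.1 hp
        rcases Finset.mem_union.1 hmem with h' | h'
        · exact h'
        · exact absurd ((hlenC p h').symm.trans hl) hne2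
      · intro hp
        refine Finset.mem_filter.2 ⟨Finset.mem_union_left _ hp, ?_⟩
        rcases Finset.mem_union.1 hp with h | h
        · exact hlenA p h
        · exact hlenB p h
    have hfilt2 : (kakutaniPartition γ (n+1)).filter (fun p => p.2 - p.1 = γ ^ (n+2)) = C := by
      rw [hQ]
      ext p
      constructor
      · intro hp
        obtain ⟨hmem, hl⟩ := Finset.mem_filter.1 hp
        rcases Finset.mem_union.1 hmem with h' | h'
        · rcases Finset.mem_union.1 h' with h'' | h''
          · exact absurd ((hlenA p h'').symm.trans hl) hne2.symm
          · exact absurd ((hlenB p h'').symm.trans hl) hne2.symm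
        · exact h'
      · intro hp
        exact Finset.mem_filter.2 ⟨Finset.mem_union_right _ hp, hlenC p hp⟩
    -- parent lemma and new disjointness
    have hparent : ∀ p ∈ kakutaniPartition γ (n+1), ∃ s ∈ P, s.1 ≤ p.1 ∧ p.2 ≤ s.2 ∧
        ((p = s ∧ s.2 - s.1 = γ ^ (n+1)) ∨
         (p = (s.1, s.1 + γ * (s.2 - s.1)) ∧ s.2 - s.1 = γ ^ n) ∨
         (p = (s.1 + γ * (s.2 - s.1), s.2) ∧ s.2 - s.1 = γ ^ n)) := by
      intro p hp
      rw [hQ] at hp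
      rcases Finset.mem_union.1 hp with hp' | hp'
      · rcases Finset.mem_union.1 hp' with hp'' | hp''
        · exact ⟨p, (Finset.mem_filter.1 hp'').1, le_refl _, le_refl _, Or.inl ⟨rfl, hlenA p hp''⟩⟩
        · obtain ⟨s, hs, rfl⟩ := Finset.mem_image.1 hp''
          have hs2 := (Finset.mem_filter.1 hs).2
          refine ⟨s, (Finset.mem_filter.1 hs).1, le_refl _, ?_, Or.inr (Or.inl ⟨rfl, hs2⟩)⟩
          show s.1 + γ * (s.2 - s.1) ≤ s.2
          nlinarith [hγn, hs2]
      · obtain ⟨s, hs, rfl⟩ := Finset.mem_image.1 hp'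
        have hs2 := (Finset.mem_filter.1 hs).2
        refine ⟨s, (Finset.mem_filter.1 hs).1, ?_, le_refl _, Or.inr (Or.inr ⟨rfl, hs2⟩)⟩
        show s.1 ≤ s.1 + γ * (s.2 - s.1)
        nlinarith [hγn, hs2]
    have hdisj' : ∀ p ∈ kakutaniPartition γ (n+1), ∀ q ∈ kakutaniPartition γ (n+1),
        p ≠ q → p.2 ≤ q.1 ∨ q.2 ≤ p.1 := by
      intro p hp q hq hpq
      obtain ⟨s, hsP, hs1, hs2, hcs⟩ := hparent p hp
      obtain ⟨t, htP, ht1, ht2, hct⟩ := hparent q hq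
      by_cases hst : s = t
      · subst hst
        rcases hcs with ⟨rfl, hls⟩ | ⟨rfl, hls⟩ | ⟨rfl, hls⟩ <;>
          rcases hct with ⟨hq', hlt'⟩ | ⟨hq', hlt'⟩ | ⟨hq', hlt'⟩
        · exact absurd hq'.symm hpq
        · exact absurd (hls.symm.trans hlt') hne
        · exact absurd (hls.symm.trans hlt') hne
        · exact absurd (hlt'.symm.trans hls) hne
        · exact absurd hq'.symm hpq
        · subst hq'; left; exact le_refl _
        · exact absurd (hlt'.symm.trans hls) hne
        · subst hq'; right; exact le_refl _
        · exact absurd hq'.symm hpq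
      · rcases hdisj s hsP t htP hst with h | h
        · left; exact le_trans hs2 (le_trans h ht1)
        · right; exact le_trans ht2 (le_trans h hs1)
    -- assemble
    refine ⟨?_, ?_, ?_, hdisj'⟩
    · intro p hp
      rw [hQ] at hp
      rcases Finset.mem_union.1 hp with hp' | hp'
      · rcases Finset.mem_union.1 hp' with h | h
        · exact Or.inl (hlenA p h)
        · exact Or.inl (hlenB p h)
      · exact Or.inr (hlenC p hp')
    · rw [hfilt1, Finset.card_union_of_disjoint hAB, hcardA, hcardB, Nat.fib_add_two]
    · rw [hfilt2, hcardC]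

/-- Let `γ = (√5 - 1)/2`.  For every `n ≥ 0`, every interval of the
Kakutani partition `γⁿω` has length `γⁿ` or `γ^{n+1}`; moreover `γⁿω` consists of
exactly `F_{n+2}` intervals, of which `F_{n+1}` have length `γⁿ` and `F_n` have length
`γ^{n+1}`, where `F` is the Fibonacci sequence with `F_0 = 0`, `F_1 = F_2 = 1`. -/
theorem stmt_7 (γ : ℝ) (hγ : γ = (Real.sqrt 5 - 1) / 2) (n : ℕ) :
    (∀ p ∈ kakutaniPartition γ n, p.2 - p.1 = γ ^ n ∨ p.2 - p.1 = γ ^ (n + 1)) ∧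
    (kakutaniPartition γ n).card = Nat.fib (n + 2) ∧
    ((kakutaniPartition γ n).filter fun p => p.2 - p.1 = γ ^ n).card = Nat.fib (n + 1) ∧
    ((kakutaniPartition γ n).filter fun p => p.2 - p.1 = γ ^ (n + 1)).card = Nat.fib n := by
  have h5 : Real.sqrt 5 ^ 2 = 5 := Real.sq_sqrt (by norm_num)
  have h5' : (2:ℝ) < Real.sqrt 5 := by nlinarith [Real.sqrt_nonneg 5]
  have h5'' : Real.sqrt 5 < 3 := by nlinarith [Real.sqrt_nonneg 5]
  have hγ0 : 0 < γ := by rw [hγ]; linarith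
  have hγ1 : γ < 1 := by rw [hγ]; linarith
  have hγq : γ * γ = 1 - γ := by rw [hγ]; nlinarith
  obtain ⟨h1, h2, h3, -⟩ := kakutani_key γ hγ0 hγ1 hγq n
  refine ⟨h1, ?_, h2, h3⟩
  have hne : γ ^ (n+1) ≠ γ ^ n := by
    have := mul_lt_mul_of_pos_right hγ1 (pow_pos hγ0 n)
    have : γ ^ (n+1) < γ ^ n := by
      calc γ ^ (n+1) = γ * γ ^ n := by ring
      _ < 1 * γ ^ n := this
      _ = γ ^ n := one_mul _
    exact ne_of_lt this
  have hsplit := Finset.card_filter_add_card_filter_not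
    (s := kakutaniPartition γ n) (p := fun p => p.2 - p.1 = γ ^ n)
  have hcompl : (kakutaniPartition γ n).filter (fun p => ¬ (p.2 - p.1 = γ ^ n)) =
      (kakutaniPartition γ n).filter (fun p => p.2 - p.1 = γ ^ (n+1)) := by
    ext p
    simp only [Finset.mem_filter]
    constructor
    · rintro ⟨hp, hnp⟩
      rcases h1 p hp with h | h
      · exact absurd h hnp
      · exact ⟨hp, h⟩
    · rintro ⟨hp, h⟩
      exact ⟨hp, h ▸ hne⟩
  rw [hcompl, h2, h3] at hsplit
  rw [← hsplit, Nat.fib_add_two]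
  omega
end
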